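/- Let T, V be bounded linear invertible operators on a complex Hilbert space H. Then for every x ∈ H and every ν ∈ [0,1]: ⟨(T Ⓢ_ν V)x, x⟩ ≤ ‖Tx‖^{2(1−ν)}·‖Vx‖^{2ν}. -/

import Mathlib

variable {H : Type*} [NormedAddCommGroup H] [InnerProductSpace ℂ H] [CompleteSpace H]

/-- `X = |VT⁻¹|² = (T*)⁻¹ V* V T⁻¹`. -/
noncomputable def qX (V T : (H →L[ℂ] H)ˣ) : H →L[ℂ] H :=
  star (↑(T⁻¹) : H →L[ℂ] H) * (star (V : H →L[ℂ] H) * (V : H →L[ℂ] H)) * (↑(T⁻¹) : H →L[ℂ] H)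

/-- The quadratic operator perspective `⊙_Φ(V,T) = T* Φ(X) T`. -/
noncomputable def qPersp (Φ : ℝ → ℝ) (V T : (H →L[ℂ] H)ˣ) : H →L[ℂ] H :=
  star (T : H →L[ℂ] H) * cfc Φ (qX V T) * (T : H →L[ℂ] H)

/-- `|T|² = T*T`. -/
noncomputable def modSq (T : (H →L[ℂ] H)ˣ) : H →L[ℂ] H :=
  star (T : H →L[ℂ] H) * (T : H →L[ℂ] H)

omit [CompleteSpace H] in
private lemma reInnerSmul (r : ℝ) (z w : H) :
    (inner ℂ ((r • z : H)) w : ℂ).re = r * (inner ℂ z w : ℂ).re := by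
  rw [RCLike.real_smul_eq_coe_smul (K := ℂ), inner_smul_left]
  simp [Complex.conj_ofReal, Complex.mul_re]

theorem stmt15 (T V : (H →L[ℂ] H)ˣ) (x : H)
    (ν : ℝ) (hν : ν ∈ Set.Icc (0 : ℝ) 1) :
    (inner ℂ ((qPersp (fun s : ℝ => s ^ ν) V T) x) x : ℂ).re ≤
      ‖(T : H →L[ℂ] H) x‖ ^ (2 * (1 - ν)) * ‖(V : H →L[ℂ] H) x‖ ^ (2 * ν) := by
  obtain ⟨hν0, hν1⟩ := hν
  by_cases hx : x = 0
  · subst hx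
    have h0 : (0:ℝ) ^ (2 * (1 - ν)) * (0:ℝ) ^ (2 * ν) = 0 := by
      rcases lt_or_eq_of_le hν1 with h | h
      · rw [Real.zero_rpow (ne_of_gt (by linarith))]; ring
      · subst h; rw [Real.zero_rpow (by norm_num : (2:ℝ) * 1 ≠ 0)]; ring
    simp only [map_zero, norm_zero, h0, inner_zero_right, Complex.zero_re, le_refl]
  have hinv : ∀ z : H, (↑(T⁻¹) : H →L[ℂ] H) ((T : H →L[ℂ] H) z) = z := by
    intro z
    rw [← ContinuousLinearMap.comp_apply, ← ContinuousLinearMap.mul_def, ← Units.val_mul,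
      inv_mul_cancel, Units.val_one, ContinuousLinearMap.one_apply]
  have hXeq : qX V T = star ((V : H →L[ℂ] H) * (↑(T⁻¹) : H →L[ℂ] H)) *
      ((V : H →L[ℂ] H) * (↑(T⁻¹) : H →L[ℂ] H)) := by
    simp [qX, star_mul, mul_assoc]
  have hXnn : (0 : H →L[ℂ] H) ≤ qX V T := hXeq ▸ star_mul_self_nonneg _
  have hXsa : IsSelfAdjoint (qX V T) := IsSelfAdjoint.of_nonneg hXnn
  set y := (T : H →L[ℂ] H) x with hy
  have hLHS : ∀ f : ℝ → ℝ,
      (inner ℂ ((qPersp f V T) x) x : ℂ) = inner ℂ (cfc f (qX V T) y) y := by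
    intro f
    simp only [qPersp, ContinuousLinearMap.mul_apply, ContinuousLinearMap.star_eq_adjoint,
      ContinuousLinearMap.adjoint_inner_left, hy]
  have hXy : (inner ℂ ((qX V T) y) y : ℂ).re = ‖(V : H →L[ℂ] H) x‖ ^ 2 := by
    have : (qX V T) y = star (↑(T⁻¹) : H →L[ℂ] H)
        ((star (V : H →L[ℂ] H)) ((V : H →L[ℂ] H) x)) := by
      simp [qX, ContinuousLinearMap.mul_apply, hy, hinv x]
    rw [this, hy, ContinuousLinearMap.star_eq_adjoint, ContinuousLinearMap.adjoint_inner_left,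
      hinv x, ContinuousLinearMap.star_eq_adjoint, ContinuousLinearMap.adjoint_inner_left]
    have := @inner_self_eq_norm_sq ℂ H _ _ _ ((V : H →L[ℂ] H) x)
    simpa using this
  have hTx : y ≠ 0 := fun h => hx (by rw [← hinv x, ← hy, h, map_zero])
  have hVx : (V : H →L[ℂ] H) x ≠ 0 := by
    intro h
    apply hx
    have hinvV : ∀ z : H, (↑(V⁻¹) : H →L[ℂ] H) ((V : H →L[ℂ] H) z) = z := by
      intro z
      rw [← ContinuousLinearMap.comp_apply, ← ContinuousLinearMap.mul_def, ← Units.val_mul,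
        inv_mul_cancel, Units.val_one, ContinuousLinearMap.one_apply]
    rw [← hinvV x, h, map_zero]
  set a : ℝ := ‖(T : H →L[ℂ] H) x‖ ^ 2 with ha'
  set b : ℝ := ‖(V : H →L[ℂ] H) x‖ ^ 2 with hb'
  have ha : 0 < a := pow_pos (norm_pos_iff.mpr hTx) 2
  have hb : 0 < b := pow_pos (norm_pos_iff.mpr hVx) 2
  set l : ℝ := b / a with hl'
  have hl : 0 < l := div_pos hb ha
  have hpt : ∀ t ∈ spectrum ℝ (qX V T),
      t ^ ν ≤ (1 - ν) * l ^ ν + (ν * l ^ (ν - 1)) * t := by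
    intro t ht
    have ht0 : 0 ≤ t := spectrum_nonneg_of_nonneg hXnn ht
    have hgm : t ^ ν * l ^ (1 - ν) ≤ ν * t + (1 - ν) * l :=
      Real.geom_mean_le_arith_mean2_weighted hν0 (by linarith) ht0 hl.le (by ring)
    have hlp : 0 < l ^ (1 - ν) := Real.rpow_pos_of_pos hl _
    rw [← le_div_iff₀ hlp] at hgm
    calc t ^ ν ≤ (ν * t + (1 - ν) * l) / l ^ (1 - ν) := hgm
      _ = (1 - ν) * l ^ ν + (ν * l ^ (ν - 1)) * t := by
          rw [Real.rpow_sub hl, Real.rpow_sub hl, Real.rpow_one]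
          field_simp
          ring
  have hcfc : cfc (fun s : ℝ => s ^ ν) (qX V T) ≤
      cfc (fun t : ℝ => (1 - ν) * l ^ ν + (ν * l ^ (ν - 1)) * t) (qX V T) :=
    cfc_mono hpt
      (fun t _ => (Real.continuousAt_rpow_const t ν (Or.inr hν0)).continuousWithinAt)
      (by fun_prop)
  have hcfc2 : cfc (fun t : ℝ => (1 - ν) * l ^ ν + (ν * l ^ (ν - 1)) * t) (qX V T)
      = algebraMap ℝ _ ((1 - ν) * l ^ ν) + (ν * l ^ (ν - 1)) • qX V T := by
    rw [cfc_add (qX V T) _ _ (by fun_prop) (by fun_prop), cfc_const _ _ hXsa,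
      cfc_const_mul_id _ _ hXsa]
  have hkey : (inner ℂ (cfc (fun s : ℝ => s ^ ν) (qX V T) y) y : ℂ).re ≤
      (1 - ν) * l ^ ν * a + (ν * l ^ (ν - 1)) * b := by
    have hpos := ((ContinuousLinearMap.nonneg_iff_isPositive _).mp
      (sub_nonneg.mpr hcfc)).inner_nonneg_left y
    rw [ContinuousLinearMap.sub_apply, inner_sub_left] at hpos
    replace hpos := (RCLike.nonneg_iff.mp hpos).1
    rw [map_sub] at hpos
    have hre : (inner ℂ ((algebraMap ℝ (H →L[ℂ] H) ((1 - ν) * l ^ ν) +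
        (ν * l ^ (ν - 1)) • qX V T) y) y : ℂ).re
        = (1 - ν) * l ^ ν * a + (ν * l ^ (ν - 1)) * b := by
      rw [ContinuousLinearMap.add_apply, inner_add_left, Algebra.algebraMap_eq_smul_one,
        ContinuousLinearMap.smul_apply, ContinuousLinearMap.one_apply,
        ContinuousLinearMap.smul_apply, Complex.add_re, reInnerSmul, reInnerSmul, hXy]
      have h1 : (inner ℂ y y : ℂ).re = a := by
        have := @inner_self_eq_norm_sq ℂ H _ _ _ y
        simpa [ha', hy] using this
      rw [h1]
    rw [hcfc2] at hpos
    simp only [RCLike.re_to_complex] at hpos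
    rw [hre] at hpos
    linarith
  have hfin : (1 - ν) * l ^ ν * a + (ν * l ^ (ν - 1)) * b
      = ‖(T : H →L[ℂ] H) x‖ ^ (2 * (1 - ν)) * ‖(V : H →L[ℂ] H) x‖ ^ (2 * ν) := by
    have hTa : ‖(T : H →L[ℂ] H) x‖ ^ (2 * (1 - ν)) = a ^ (1 - ν) := by
      rw [ha', ← Real.rpow_natCast ‖(T : H →L[ℂ] H) x‖ 2, ← Real.rpow_mul (norm_nonneg _)]
      norm_num
    have hVb : ‖(V : H →L[ℂ] H) x‖ ^ (2 * ν) = b ^ ν := by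
      rw [hb', ← Real.rpow_natCast ‖(V : H →L[ℂ] H) x‖ 2, ← Real.rpow_mul (norm_nonneg _)]
      norm_num
    rw [hTa, hVb, hl', Real.div_rpow hb.le ha.le, Real.div_rpow hb.le ha.le,
      Real.rpow_sub hb, Real.rpow_sub ha, Real.rpow_sub ha, Real.rpow_one, Real.rpow_one]
    have hane : a ≠ 0 := ha.ne'
    have hbne : b ≠ 0 := hb.ne'
    have haν : a ^ ν ≠ 0 := (Real.rpow_pos_of_pos ha ν).ne'
    have hbν : b ^ ν ≠ 0 := (Real.rpow_pos_of_pos hb ν).ne'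
    field_simp
    ring
  rw [hLHS, ← hfin]
  exact hkey
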